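/- The digit-reversal action ψ of (ℚ_p,+) on ℤ_p² is free: if ψ(g,(x,y)) = (x,y) for some (x,y) ∈ ℤ_p², then g = 0. -/
import Mathlib

open scoped Classical

/-- Reversal of the base-`p` digit string of length `n`. -/
def rev (p n a : ℕ) : ℕ := ∑ i ∈ Finset.range n, (a / p ^ (n - 1 - i) % p) * p ^ i

lemma digit_extract (p : ℕ) (hp : 1 < p) :
    ∀ (n : ℕ) (e : ℕ → ℕ), (∀ i, e i < p) → ∀ j < n,
      (∑ i ∈ Finset.range n, e i * p ^ i) / p ^ j % p = e j := by
  intro n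
  induction n with
  | zero => intro e he j hj; omega
  | succ n ih =>
    intro e he j hj
    rw [Finset.sum_range_succ']
    have hrw : (∑ i ∈ Finset.range n, e (i + 1) * p ^ (i + 1)) + e 0 * p ^ 0
        = p * (∑ i ∈ Finset.range n, e (i + 1) * p ^ i) + e 0 := by
      rw [Finset.mul_sum, pow_zero, mul_one]
      congr 1
      refine Finset.sum_congr rfl fun i _ => ?_
      ring
    rw [hrw]
    cases j with
    | zero =>
      simp only [pow_zero, Nat.div_one]
      rw [Nat.mul_add_mod]
      exact Nat.mod_eq_of_lt (he 0)
    | succ k =>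
      rw [pow_succ', ← Nat.div_div_eq_div_mul, Nat.mul_add_div (by omega),
        Nat.div_eq_of_lt (he 0), Nat.add_zero]
      exact ih (fun i => e (i + 1)) (fun i => he (i + 1)) k (by omega)

lemma digit_expand (p : ℕ) (hp : 1 < p) :
    ∀ (n a : ℕ), a < p ^ n → (∑ i ∈ Finset.range n, (a / p ^ i % p) * p ^ i) = a := by
  intro n
  induction n with
  | zero =>
    intro a ha
    simp only [pow_zero] at ha
    interval_cases a
    simp
  | succ n ih =>
    intro a ha
    rw [Finset.sum_range_succ']
    have hdiv : a / p < p ^ n := by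
      rw [Nat.div_lt_iff_lt_mul (by omega)]
      rw [pow_succ] at ha
      exact ha
    have h2 : (∑ i ∈ Finset.range n, (a / p ^ (i + 1) % p) * p ^ (i + 1))
        = p * (a / p) := by
      have : ∀ i ∈ Finset.range n,
          (a / p ^ (i + 1) % p) * p ^ (i + 1) = p * (((a / p) / p ^ i % p) * p ^ i) := by
        intro i _
        rw [pow_succ', Nat.div_div_eq_div_mul]
        ring
      rw [Finset.sum_congr rfl this, ← Finset.mul_sum, ih (a / p) hdiv]
    rw [h2]
    simp only [pow_zero, Nat.div_one, mul_one]
    rw [Nat.add_comm]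
    exact Nat.mod_add_div a p

lemma geom_sum_pred (p : ℕ) (hp : 1 < p) (n : ℕ) :
    (∑ i ∈ Finset.range n, (p - 1) * p ^ i) = p ^ n - 1 := by
  induction n with
  | zero => simp
  | succ n ih =>
    rw [Finset.sum_range_succ, ih, pow_succ]
    have hq : 1 ≤ p ^ n := Nat.one_le_pow _ _ (by omega)
    have h1 : (p - 1) * p ^ n = p ^ n * p - p ^ n := by
      rw [Nat.sub_mul, one_mul, Nat.mul_comm]
    have h2 : p ^ n ≤ p ^ n * p := Nat.le_mul_of_pos_right _ (by omega)
    omega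

lemma rev_lt (p : ℕ) (hp : 1 < p) (n a : ℕ) : rev p n a < p ^ n := by
  have hle : rev p n a ≤ ∑ i ∈ Finset.range n, (p - 1) * p ^ i := by
    refine Finset.sum_le_sum fun i _ => ?_
    exact Nat.mul_le_mul_right _ (by
      have := Nat.mod_lt (a / p ^ (n - 1 - i)) (show 0 < p by omega); omega)
  rw [geom_sum_pred p hp] at hle
  have : 1 ≤ p ^ n := Nat.one_le_pow _ _ (by omega)
  omega

lemma rev_rev (p : ℕ) (hp : 1 < p) (n a : ℕ) (ha : a < p ^ n) :
    rev p n (rev p n a) = a := by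
  have he : ∀ i, a / p ^ (n - 1 - i) % p < p := fun i =>
    Nat.mod_lt _ (by omega)
  have hdig : ∀ j < n, rev p n a / p ^ j % p = a / p ^ (n - 1 - j) % p := by
    intro j hj
    exact digit_extract p hp n _ he j hj
  unfold rev
  calc (∑ i ∈ Finset.range n, (rev p n a / p ^ (n - 1 - i) % p) * p ^ i)
      = ∑ i ∈ Finset.range n, (a / p ^ i % p) * p ^ i := by
        refine Finset.sum_congr rfl fun i hi => ?_
        rw [Finset.mem_range] at hi
        rw [hdig (n - 1 - i) (by omega)]
        have hni : n - 1 - (n - 1 - i) = i := by omega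
        rw [hni]
    _ = a := digit_expand p hp n a ha

/-- The result of applying the digit-reversal map, given the decomposition
`g = z + a / p^n` of the acting group element. -/
noncomputable def psiOut (p : ℕ) [Fact p.Prime] (n : ℕ) (z : ℤ_[p]) (a : ℕ)
    (m : ℤ_[p] × ℤ_[p]) : ℤ_[p] × ℤ_[p] :=
  let b := m.2.appr n
  let c := a + rev p n b
  if c < p ^ n then (m.1 + z, m.2 - (b : ℤ_[p]) + (rev p n c : ℤ_[p]))
  else (m.1 + z + 1, m.2 - (b : ℤ_[p]) + (rev p n (c - p ^ n) : ℤ_[p]))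

/-- The digit-reversal action of `(ℚ_p, +)` on `ℤ_p²`. -/
noncomputable def psi (p : ℕ) [Fact p.Prime] (g : ℚ_[p]) (m : ℤ_[p] × ℤ_[p]) :
    ℤ_[p] × ℤ_[p] :=
  if h : ∃ n : ℕ, ∃ z : ℤ_[p], ∃ a : ℕ, a < p ^ n ∧
      g = (z : ℚ_[p]) + (a : ℚ_[p]) / (p : ℚ_[p]) ^ n then
    psiOut p h.choose h.choose_spec.choose h.choose_spec.choose_spec.choose m
  else m

lemma psiOut_fixed (p : ℕ) [Fact p.Prime] (n : ℕ) (z : ℤ_[p]) (a : ℕ)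
    (m : ℤ_[p] × ℤ_[p]) (ha : a < p ^ n) (h : psiOut p n z a m = m) :
    z = 0 ∧ a = 0 := by
  have hp : 1 < p := (Fact.out : p.Prime).one_lt
  simp only [psiOut] at h
  set b := m.2.appr n with hbdef
  have hb : b < p ^ n := PadicInt.appr_lt m.2 n
  have hrb : rev p n b < p ^ n := rev_lt p hp n b
  split_ifs at h with hc
  · have h1 : m.1 + z = m.1 := congrArg Prod.fst h
    have h2 : m.2 - (b : ℤ_[p]) + (rev p n (a + rev p n b) : ℤ_[p]) = m.2 :=
      congrArg Prod.snd h
    have hz : z = 0 := by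
      have := add_left_cancel (h1.trans (add_zero m.1).symm)
      exact this
    have hcast : ((rev p n (a + rev p n b) : ℕ) : ℤ_[p]) = ((b : ℕ) : ℤ_[p]) := by
      linear_combination h2
    have hrc : rev p n (a + rev p n b) = b := Nat.cast_inj.mp hcast
    have := rev_rev p hp n (a + rev p n b) hc
    rw [hrc] at this
    have hrrb : rev p n b = rev p n b := rfl
    constructor
    · exact hz
    · omega
  · exfalso
    have h2 : m.2 - (b : ℤ_[p]) + (rev p n (a + rev p n b - p ^ n) : ℤ_[p]) = m.2 :=
      congrArg Prod.snd h
    have hcast : ((rev p n (a + rev p n b - p ^ n) : ℕ) : ℤ_[p]) = ((b : ℕ) : ℤ_[p]) := by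
      linear_combination h2
    have hrc : rev p n (a + rev p n b - p ^ n) = b := Nat.cast_inj.mp hcast
    have hlt : a + rev p n b - p ^ n < p ^ n := by omega
    have := rev_rev p hp n (a + rev p n b - p ^ n) hlt
    rw [hrc] at this
    omega

lemma exists_decomp (p : ℕ) [Fact p.Prime] (g : ℚ_[p]) :
    ∃ n : ℕ, ∃ z : ℤ_[p], ∃ a : ℕ, a < p ^ n ∧
      g = (z : ℚ_[p]) + (a : ℚ_[p]) / (p : ℚ_[p]) ^ n := by
  have hp : 1 < p := (Fact.out : p.Prime).one_lt
  have hp' : (1 : ℝ) < p := by exact_mod_cast hp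
  obtain ⟨n, hn⟩ := pow_unbounded_of_one_lt ‖g‖ hp'
  have hmem : ‖g * (p : ℚ_[p]) ^ n‖ ≤ 1 := by
    rw [norm_mul, norm_pow, Padic.norm_p, inv_pow]
    have hpos : (0 : ℝ) < (p : ℝ) ^ n := by positivity
    rw [← div_eq_mul_inv, div_le_one hpos]
    exact le_of_lt hn
  set w : ℤ_[p] := ⟨g * (p : ℚ_[p]) ^ n, hmem⟩ with hw
  obtain ⟨z, hz⟩ : ((p : ℤ_[p]) ^ n) ∣ (w - (w.appr n : ℤ_[p])) :=
    Ideal.mem_span_singleton.mp (PadicInt.appr_spec n w)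
  refine ⟨n, z, w.appr n, PadicInt.appr_lt w n, ?_⟩
  have hzq : (w : ℚ_[p]) - ((w.appr n : ℤ_[p]) : ℚ_[p])
      = ((p : ℤ_[p]) ^ n : ℤ_[p]) * (z : ℚ_[p]) := by
    exact_mod_cast congrArg (fun x : ℤ_[p] => (x : ℚ_[p])) hz
  push_cast at hzq
  have hpn : ((p : ℚ_[p])) ^ n ≠ 0 := by
    apply pow_ne_zero
    exact_mod_cast (Fact.out : p.Prime).ne_zero
  field_simp
  linear_combination hzq

/-- The digit-reversal action of `(ℚ_p, +)` on `ℤ_p²` is free. -/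
theorem psi_free (p : ℕ) [Fact p.Prime] (g : ℚ_[p]) (m : ℤ_[p] × ℤ_[p])
    (h : psi p g m = m) : g = 0 := by
  have hex := exists_decomp p g
  unfold psi at h
  rw [dif_pos hex] at h
  obtain ⟨ha, hg⟩ := hex.choose_spec.choose_spec.choose_spec
  obtain ⟨hz0, ha0⟩ := psiOut_fixed p _ _ _ m ha h
  have h1 : ((hex.choose_spec.choose : ℤ_[p]) : ℚ_[p]) = 0 := by
    rw [hz0]; simp
  have h2 : ((hex.choose_spec.choose_spec.choose : ℕ) : ℚ_[p]) = 0 := by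
    rw [ha0]; simp
  rw [hg]
  linear_combination h1 + h2 / (p : ℚ_[p]) ^ hex.choose
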